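/- arXiv:1907.03156 — 5 statements merged into one kernel-verified Lean document; each statement's English description precedes it below -/
import Mathlib

section
/- Suppose 2N×2N block matrices Y^L_n, Y^R_n (with N×N blocks built from matrices P^L_n, Q^L_n, P^L_{n-1}, Q^L_{n-1}, C_{n-1} and P^R_n, Q^R_n, P^R_{n-1}, Q^R_{n-1}) satisfy Y^L_n = [[P^L_n, Q^L_n],[−C_{n-1}P^L_{n-1}, −C_{n-1}Q^L_{n-1}]] and Y^R_n = [[P^R_n, −P^R_{n-1}C_{n-1}],[Q^R_n, −Q^R_{n-1}C_{n-1}]], and that (Y^L_n)⁻¹ = J·Y^R_n·J⁻¹ where J = [[0,I],[−I,0]]. Then: Q^L_n·P^R_{n-1} − P^L_n·Q^R_{n-1} = C_{n-1}⁻¹, P^L_{n-1}·Q^R_n − Q^L_{n-1}·P^R_n = C_{n-1}⁻¹, and Q^L_n·P^R_n − P^L_n·Q^R_n = 0. -/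
open Matrix

lemma Jinv (N : ℕ) :
    (fromBlocks 0 1 (-1) 0 : Matrix (Fin N ⊕ Fin N) (Fin N ⊕ Fin N) ℂ)⁻¹ =
      fromBlocks 0 (-1) 1 0 := by
  apply Matrix.inv_eq_right_inv
  simp [Matrix.fromBlocks_multiply, ← Matrix.fromBlocks_one]

/-- Entrywise identities resulting from the inversion formula
`(Y^L_n)⁻¹ = J Y^R_n J⁻¹` for the fundamental matrices of the Riemann–Hilbert problem. -/
theorem stmt_4 (N : ℕ)
    (PLn QLn PLn1 QLn1 PRn QRn PRn1 QRn1 Cn1 : Matrix (Fin N) (Fin N) ℂ)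
    (hC : IsUnit Cn1)
    (YL : Matrix (Fin N ⊕ Fin N) (Fin N ⊕ Fin N) ℂ)
    (YR : Matrix (Fin N ⊕ Fin N) (Fin N ⊕ Fin N) ℂ)
    (J : Matrix (Fin N ⊕ Fin N) (Fin N ⊕ Fin N) ℂ)
    (hYL : YL = fromBlocks PLn QLn (-(Cn1 * PLn1)) (-(Cn1 * QLn1)))
    (hYR : YR = fromBlocks PRn (-(PRn1 * Cn1)) QRn (-(QRn1 * Cn1)))
    (hJ : J = fromBlocks 0 1 (-1) 0)
    (hinv : YL * (J * YR * J⁻¹) = 1) :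
    QLn * PRn1 - PLn * QRn1 = Cn1⁻¹ ∧
    PLn1 * QRn - QLn1 * PRn = Cn1⁻¹ ∧
    QLn * PRn - PLn * QRn = 0 := by
  subst hYL hYR hJ
  rw [Jinv] at hinv
  rw [← Matrix.fromBlocks_one] at hinv
  simp only [Matrix.fromBlocks_multiply] at hinv
  have h11 := congrArg Matrix.toBlocks₁₁ hinv
  have h12 := congrArg Matrix.toBlocks₁₂ hinv
  have h22 := congrArg Matrix.toBlocks₂₂ hinv
  simp only [Matrix.toBlocks_fromBlocks₁₁, Matrix.toBlocks_fromBlocks₁₂,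
    Matrix.toBlocks_fromBlocks₂₂] at h11 h12 h22
  have e1 : (QLn * PRn1 - PLn * QRn1) * Cn1 = 1 := by
    rw [← h11]; noncomm_ring
  have e3 : QLn * PRn - PLn * QRn = 0 := by
    rw [← h12]; noncomm_ring
  have e2 : Cn1 * (PLn1 * QRn - QLn1 * PRn) = 1 := by
    rw [← h22]; noncomm_ring
  refine ⟨?_, ?_, e3⟩
  · exact (Matrix.inv_eq_left_inv e1).symm
  · exact (Matrix.inv_eq_right_inv e2).symm
end

section
/- Let W : (0,∞) → Mat(N,ℂ) be twice differentiable and satisfy the Pearson equation z·W'(z) = h^L(z)·W(z) + W(z)·h^R(z) with h^L, h^R differentiable. Set a^L := 2h^L + I_N, b^L := 𝒩(h^L) = (h^L)' + (h^L)²/z, and similarly a^R, b^R. Then (z·W)'' − (a^L·W)' + b^L·W = W·b^R. -/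
/-- Entrywise derivative of a matrix-valued function of a real variable. -/
noncomputable def RDeriv {N : ℕ} (W : ℝ → Matrix (Fin N) (Fin N) ℂ) (t : ℝ) :
    Matrix (Fin N) (Fin N) ℂ :=
  Matrix.of fun i j => deriv (fun s => W s i j) t

lemma RDeriv_congr {N : ℕ} {F G : ℝ → Matrix (Fin N) (Fin N) ℂ} {z : ℝ}
    (h : ∀ᶠ t in nhds z, F t = G t) : RDeriv F z = RDeriv G z := by
  ext i j
  exact Filter.EventuallyEq.deriv_eq (h.mono fun t ht => by show F t i j = G t i j; rw [ht])

lemma RDeriv_add {N : ℕ} (F G : ℝ → Matrix (Fin N) (Fin N) ℂ) (t : ℝ)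
    (hF : ∀ i j, DifferentiableAt ℝ (fun s => F s i j) t)
    (hG : ∀ i j, DifferentiableAt ℝ (fun s => G s i j) t) :
    RDeriv (fun s => F s + G s) t = RDeriv F t + RDeriv G t := by
  ext i j
  simp only [RDeriv, Matrix.of_apply, Matrix.add_apply]
  rw [deriv_fun_add (hF i j) (hG i j)]

lemma RDeriv_mul {N : ℕ} (A B : ℝ → Matrix (Fin N) (Fin N) ℂ) (t : ℝ)
    (hA : ∀ i j, DifferentiableAt ℝ (fun s => A s i j) t)
    (hB : ∀ i j, DifferentiableAt ℝ (fun s => B s i j) t) :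
    RDeriv (fun s => A s * B s) t = RDeriv A t * B t + A t * RDeriv B t := by
  ext i j
  simp only [RDeriv, Matrix.of_apply, Matrix.add_apply, Matrix.mul_apply]
  rw [deriv_fun_sum fun k _ => (hA i k).fun_mul (hB k j), ← Finset.sum_add_distrib]
  exact Finset.sum_congr rfl fun k _ => deriv_fun_mul (hA i k) (hB k j)

lemma RDeriv_smul_id {N : ℕ} (F : ℝ → Matrix (Fin N) (Fin N) ℂ) (t : ℝ)
    (hF : ∀ i j, DifferentiableAt ℝ (fun s => F s i j) t) :
    RDeriv (fun s => s • F s) t = F t + t • RDeriv F t := by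
  ext i j
  simp only [RDeriv, Matrix.of_apply, Matrix.add_apply, Matrix.smul_apply]
  rw [deriv_fun_smul differentiableAt_fun_id (hF i j)]
  simp [add_comm]

lemma alg {N : ℕ} (z : ℝ) (hz : z ≠ 0) (A A' B B' Wz W1 W2 : Matrix (Fin N) (Fin N) ℂ)
    (F1 : z • W1 = A * Wz + Wz * B)
    (F2 : W1 + z • W2 = A' * Wz + A * W1 + (W1 * B + Wz * B')) :
    W1 + (W1 + z • W2) - ((2:ℂ) • A' * Wz + ((2:ℂ) • A + 1) * W1)
      + (A' + z⁻¹ • (A * A)) * Wz = Wz * (B' + z⁻¹ • (B * B)) := by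
  apply smul_right_injective (Matrix (Fin N) (Fin N) ℂ) hz
  have hAA : (A * A) * Wz = z • (A * W1) - A * Wz * B := by
    have h := congrArg (fun M => A * M) F1
    simp only [Matrix.mul_smul, mul_add, ← mul_assoc] at h
    rw [h]; abel
  have hBB : Wz * (B * B) = z • (W1 * B) - A * Wz * B := by
    have h := congrArg (fun M => M * B) F1
    simp only [Matrix.smul_mul, add_mul, ← mul_assoc] at h
    rw [← mul_assoc, h]; abel
  have hW2 : z • W2 = A' * Wz + A * W1 + (W1 * B + Wz * B') - W1 := by
    rw [← F2]; abel
  simp only [smul_add, smul_sub, add_mul, Matrix.smul_mul, Matrix.mul_smul, one_mul,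
    mul_add, smul_smul, mul_inv_cancel₀ hz, one_smul, two_smul, hW2, hAA, hBB]
  match_scalars <;> field_simp <;> ring

/-- If `W` satisfies the Pearson equation `z W' = h^L W + W h^R` on `(0,∞)`, then with
`a^L = 2h^L + I`, `b^L = (h^L)' + (h^L)²/z` (and similarly `b^R`), one has
`(zW)'' − (a^L W)' + b^L W = W b^R`. -/
theorem stmt_9 (N : ℕ)
    (W hL hR : ℝ → Matrix (Fin N) (Fin N) ℂ)
    (hWdiff : ∀ t > (0:ℝ), ∀ i j, DifferentiableAt ℝ (fun s => W s i j) t)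
    (hWdiff2 : ∀ t > (0:ℝ), ∀ i j, DifferentiableAt ℝ (fun s => RDeriv W s i j) t)
    (hhLdiff : ∀ t > (0:ℝ), ∀ i j, DifferentiableAt ℝ (fun s => hL s i j) t)
    (hhRdiff : ∀ t > (0:ℝ), ∀ i j, DifferentiableAt ℝ (fun s => hR s i j) t)
    (hPearson : ∀ t > (0:ℝ), t • RDeriv W t = hL t * W t + W t * hR t) :
    ∀ z > (0:ℝ),
      RDeriv (RDeriv (fun t => t • W t)) z
        - RDeriv (fun t => ((2:ℂ) • hL t + 1) * W t) z
        + (RDeriv hL z + z⁻¹ • (hL z * hL z)) * W z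
      = W z * (RDeriv hR z + z⁻¹ • (hR z * hR z)) := by
  intro z hz
  have hev : ∀ᶠ t in nhds z, (0:ℝ) < t := eventually_gt_nhds hz
  -- second derivative of t • W
  have h2 : RDeriv (RDeriv (fun t => t • W t)) z
      = RDeriv W z + (RDeriv W z + z • RDeriv (RDeriv W) z) := by
    rw [RDeriv_congr (hev.mono fun t ht => RDeriv_smul_id W t (hWdiff t ht))]
    rw [RDeriv_add _ _ z (hWdiff z hz)
      (fun i j => by
        have : (fun s => (s • RDeriv W s) i j) = fun s => s • (RDeriv W s i j) := by
          funext s; simp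
        rw [this]; exact differentiableAt_fun_id.smul (hWdiff2 z hz i j)),
      RDeriv_smul_id _ z (hWdiff2 z hz)]
  -- differentiated Pearson equation
  have hP' : RDeriv W z + z • RDeriv (RDeriv W) z
      = RDeriv hL z * W z + hL z * RDeriv W z
        + (RDeriv W z * hR z + W z * RDeriv hR z) := by
    have e1 : RDeriv (fun t => t • RDeriv W t) z
        = RDeriv (fun t => hL t * W t + W t * hR t) z :=
      RDeriv_congr (hev.mono fun t ht => hPearson t ht)
    rw [RDeriv_smul_id _ z (hWdiff2 z hz),
      RDeriv_add _ _ z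
        (fun i j => by
          have : (fun s => (hL s * W s) i j) = fun s => ∑ k, hL s i k * W s k j := by
            funext s; simp [Matrix.mul_apply]
          rw [this]
          exact DifferentiableAt.fun_sum fun k _ => (hhLdiff z hz i k).mul (hWdiff z hz k j))
        (fun i j => by
          have : (fun s => (W s * hR s) i j) = fun s => ∑ k, W s i k * hR s k j := by
            funext s; simp [Matrix.mul_apply]
          rw [this]
          exact DifferentiableAt.fun_sum fun k _ => (hWdiff z hz i k).mul (hhRdiff z hz k j)),
      RDeriv_mul _ _ z (hhLdiff z hz) (hWdiff z hz),
      RDeriv_mul _ _ z (hWdiff z hz) (hhRdiff z hz)] at e1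
    rw [e1]
  -- derivative of (2 hL + 1) W
  have h3 : RDeriv (fun t => ((2:ℂ) • hL t + 1) * W t) z
      = (2:ℂ) • RDeriv hL z * W z + ((2:ℂ) • hL z + 1) * RDeriv W z := by
    rw [RDeriv_mul _ _ z
      (fun i j => by
        have : (fun s => (((2:ℂ) • hL s + 1)) i j)
            = fun s => (2:ℂ) * hL s i j + (1 : Matrix (Fin N) (Fin N) ℂ) i j := by
          funext s; simp [Matrix.smul_apply, smul_eq_mul]
        rw [this]
        exact ((hhLdiff z hz i j).const_mul _).add_const _)
      (hWdiff z hz)]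
    congr 1
    · congr 1
      ext i j
      simp only [RDeriv, Matrix.of_apply, Matrix.smul_apply, smul_eq_mul]
      have : (fun s => (((2:ℂ) • hL s + 1)) i j)
          = fun s => (2:ℂ) * hL s i j + (1 : Matrix (Fin N) (Fin N) ℂ) i j := by
        funext s; simp [Matrix.smul_apply, smul_eq_mul]
      rw [this, deriv_add_const, deriv_const_mul _ (hhLdiff z hz i j)]
  rw [h2, h3]
  exact alg z hz.ne' (hL z) (RDeriv hL z) (hR z) (RDeriv hR z) (W z) (RDeriv W z)
    (RDeriv (RDeriv W) z) (hPearson z hz) (hP'.trans (by abel))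
end

section
/- Let W : (0,∞) → Mat(N,ℂ) be twice differentiable and satisfy z·W'(z) = h^L(z)·W(z) + W(z)·h^R(z). With a^R := 2h^R + I_N and b^L := 𝒩(h^L), b^R := 𝒩(h^R), it holds that (z·W)'' − (W·a^R)' + W·b^R = b^L·W. -/
variable {N : ℕ}

lemma rderiv_congr_nhds {F G : ℝ → Matrix (Fin N) (Fin N) ℂ} {z : ℝ} (hz : 0 < z)
    (h : ∀ t > (0:ℝ), F t = G t) : RDeriv F z = RDeriv G z := by
  ext i j
  exact Filter.EventuallyEq.deriv_eq <| by
    filter_upwards [isOpen_Ioi.mem_nhds (show z ∈ Set.Ioi (0:ℝ) from hz)] with t ht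
    rw [h t ht]

lemma diffAt_mul_entry {A B : ℝ → Matrix (Fin N) (Fin N) ℂ} {t : ℝ}
    (hA : ∀ i j, DifferentiableAt ℝ (fun s => A s i j) t)
    (hB : ∀ i j, DifferentiableAt ℝ (fun s => B s i j) t) (i j : Fin N) :
    DifferentiableAt ℝ (fun s => (A s * B s) i j) t := by
  simp only [Matrix.mul_apply]
  exact DifferentiableAt.fun_sum fun k _ => (hA i k).mul (hB k j)

lemma rderiv_mul {A B : ℝ → Matrix (Fin N) (Fin N) ℂ} {z : ℝ}
    (hA : ∀ i j, DifferentiableAt ℝ (fun s => A s i j) z)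
    (hB : ∀ i j, DifferentiableAt ℝ (fun s => B s i j) z) :
    RDeriv (fun t => A t * B t) z = RDeriv A z * B z + A z * RDeriv B z := by
  ext i j
  simp only [RDeriv, Matrix.of_apply, Matrix.add_apply, Matrix.mul_apply]
  rw [deriv_fun_sum fun k _ => (hA i k).fun_mul (hB k j), ← Finset.sum_add_distrib]
  refine Finset.sum_congr rfl fun k _ => ?_
  rw [deriv_fun_mul (hA i k) (hB k j)]

lemma rderiv_add {A B : ℝ → Matrix (Fin N) (Fin N) ℂ} {z : ℝ}
    (hA : ∀ i j, DifferentiableAt ℝ (fun s => A s i j) z)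
    (hB : ∀ i j, DifferentiableAt ℝ (fun s => B s i j) z) :
    RDeriv (fun t => A t + B t) z = RDeriv A z + RDeriv B z := by
  ext i j
  simp only [RDeriv, Matrix.of_apply, Matrix.add_apply]
  exact deriv_add (hA i j) (hB i j)

lemma rderiv_smul_id {F : ℝ → Matrix (Fin N) (Fin N) ℂ} {z : ℝ}
    (hF : ∀ i j, DifferentiableAt ℝ (fun s => F s i j) z) :
    RDeriv (fun t => t • F t) z = F z + z • RDeriv F z := by
  ext i j
  simp only [RDeriv, Matrix.of_apply, Matrix.add_apply, Matrix.smul_apply]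
  rw [deriv_fun_smul differentiableAt_fun_id (hF i j)]
  simp [add_comm]

lemma rderiv_two_smul_add_one {F : ℝ → Matrix (Fin N) (Fin N) ℂ} {z : ℝ}
    (hF : ∀ i j, DifferentiableAt ℝ (fun s => F s i j) z) :
    RDeriv (fun t => (2:ℂ) • F t + 1) z = (2:ℂ) • RDeriv F z := by
  ext i j
  simp only [RDeriv, Matrix.of_apply, Matrix.add_apply, Matrix.smul_apply]
  rw [deriv_add_const, deriv_fun_const_smul _ (hF i j)]

lemma diffAt_two_smul_add_one {F : ℝ → Matrix (Fin N) (Fin N) ℂ} {z : ℝ}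
    (hF : ∀ i j, DifferentiableAt ℝ (fun s => F s i j) z) (i j : Fin N) :
    DifferentiableAt ℝ (fun s => ((2:ℂ) • F s + 1) i j) z := by
  simp only [Matrix.add_apply, Matrix.smul_apply]
  exact (((hF i j).const_smul (2:ℂ)).add_const _)

/-- If `W` satisfies the Pearson equation `z W' = h^L W + W h^R` on `(0,∞)`, then with
`a^R = 2h^R + I`, `b^L = (h^L)' + (h^L)²/z`, `b^R = (h^R)' + (h^R)²/z`, one has
`(zW)'' − (W a^R)' + W b^R = b^L W`. -/
theorem stmt_10 (N : ℕ)
    (W hL hR : ℝ → Matrix (Fin N) (Fin N) ℂ)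
    (hWdiff : ∀ t > (0:ℝ), ∀ i j, DifferentiableAt ℝ (fun s => W s i j) t)
    (hWdiff2 : ∀ t > (0:ℝ), ∀ i j, DifferentiableAt ℝ (fun s => RDeriv W s i j) t)
    (hhLdiff : ∀ t > (0:ℝ), ∀ i j, DifferentiableAt ℝ (fun s => hL s i j) t)
    (hhRdiff : ∀ t > (0:ℝ), ∀ i j, DifferentiableAt ℝ (fun s => hR s i j) t)
    (hPearson : ∀ t > (0:ℝ), t • RDeriv W t = hL t * W t + W t * hR t) :
    ∀ z > (0:ℝ),
      RDeriv (RDeriv (fun t => t • W t)) z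
        - RDeriv (fun t => W t * ((2:ℂ) • hR t + 1)) z
        + W z * (RDeriv hR z + z⁻¹ • (hR z * hR z))
      = (RDeriv hL z + z⁻¹ • (hL z * hL z)) * W z := by
  intro z hz
  have hz' : z ≠ 0 := ne_of_gt hz
  have hsm : ∀ i j, DifferentiableAt ℝ (fun s => (s • RDeriv W s) i j) z := by
    intro i j
    simp only [Matrix.smul_apply]
    exact differentiableAt_fun_id.smul (hWdiff2 z hz i j)
  -- first derivative of t • W t
  have e1 : RDeriv (RDeriv (fun t => t • W t)) z
      = RDeriv W z + (RDeriv W z + z • RDeriv (RDeriv W) z) := by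
    rw [rderiv_congr_nhds hz (fun t ht => rderiv_smul_id (hWdiff t ht)),
      rderiv_add (hWdiff z hz) hsm, rderiv_smul_id (hWdiff2 z hz)]
  -- derivative of the Pearson equation
  have e2 : RDeriv W z + z • RDeriv (RDeriv W) z
      = RDeriv hL z * W z + hL z * RDeriv W z
        + (RDeriv W z * hR z + W z * RDeriv hR z) := by
    rw [← rderiv_smul_id (hWdiff2 z hz), rderiv_congr_nhds hz hPearson,
      rderiv_add (diffAt_mul_entry (hhLdiff z hz) (hWdiff z hz))
        (diffAt_mul_entry (hWdiff z hz) (hhRdiff z hz)),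
      rderiv_mul (hhLdiff z hz) (hWdiff z hz),
      rderiv_mul (hWdiff z hz) (hhRdiff z hz)]
  have e3 : RDeriv (fun t => W t * ((2:ℂ) • hR t + 1)) z
      = RDeriv W z * ((2:ℂ) • hR z + 1) + W z * ((2:ℂ) • RDeriv hR z) := by
    rw [rderiv_mul (hWdiff z hz) (diffAt_two_smul_add_one (hhRdiff z hz)),
      rderiv_two_smul_add_one (hhRdiff z hz)]
  have e4 : RDeriv W z = z⁻¹ • (hL z * W z + W z * hR z) := by
    rw [← hPearson z hz, smul_smul, inv_mul_cancel₀ hz', one_smul]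
  rw [e1, e3]
  have e5 : z • RDeriv (RDeriv W) z
      = RDeriv hL z * W z + hL z * RDeriv W z
        + (RDeriv W z * hR z + W z * RDeriv hR z) - RDeriv W z := by
    rw [← e2]; abel
  rw [e5, e4]
  simp only [mul_add, add_mul, smul_mul_assoc, mul_smul_comm, smul_add, mul_one, two_smul,
    mul_assoc]
  abel
end

section
/- Suppose sequences of N×N matrices β_n, γ_n, ξ_n, μ_n satisfy the commutative dPIV system: all of {A, C, β_n, γ_n} pairwise commute, ξ_n = A/2 + n·I + C·γ_n, μ_n = C·β_n + B (with B also commuting with everything), and the two relations β_n·μ_n = −(ξ_n + ξ_{n+1}) and β_n·(ξ_n − ξ_{n+1}) = −γ_n·μ_{n-1} + γ_{n+1}·μ_{n+1}. Then ξ_{n+1}² − ξ_n² = γ_{n+1}·μ_n·μ_{n+1} − γ_n·μ_{n-1}·μ_n. -/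
/-- In the commutative dPIV setting, the relations `β_n μ_n = −(ξ_n + ξ_{n+1})` and
`β_n (ξ_n − ξ_{n+1}) = −γ_n μ_{n-1} + γ_{n+1} μ_{n+1}` imply
`ξ_{n+1}² − ξ_n² = γ_{n+1} μ_n μ_{n+1} − γ_n μ_{n-1} μ_n`. -/
theorem stmt_15 (NN : ℕ)
    (A B C : Matrix (Fin NN) (Fin NN) ℂ)
    (β γ ξ μ : ℕ → Matrix (Fin NN) (Fin NN) ℂ)
    (hAB : Commute A B) (hAC : Commute A C) (hBC : Commute B C)
    (hAβ : ∀ n, Commute A (β n)) (hAγ : ∀ n, Commute A (γ n))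
    (hBβ : ∀ n, Commute B (β n)) (hBγ : ∀ n, Commute B (γ n))
    (hCβ : ∀ n, Commute C (β n)) (hCγ : ∀ n, Commute C (γ n))
    (hββ : ∀ m n, Commute (β m) (β n))
    (hβγ : ∀ m n, Commute (β m) (γ n))
    (hγγ : ∀ m n, Commute (γ m) (γ n))
    (hξ : ∀ n, ξ n = (1/2 : ℂ) • A + (n : ℂ) • (1 : Matrix (Fin NN) (Fin NN) ℂ) + C * γ n)
    (hμ : ∀ n, μ n = C * β n + B)
    (h1 : ∀ n, β n * μ n = -(ξ n + ξ (n + 1)))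
    (h2 : ∀ n, β n * (ξ n - ξ (n + 1)) = -(γ n * μ (n - 1)) + γ (n + 1) * μ (n + 1)) :
    ∀ n, ξ (n + 1) ^ 2 - ξ n ^ 2
      = γ (n + 1) * μ n * μ (n + 1) - γ n * μ (n - 1) * μ n := by
  intro n
  have hξξ : ∀ m k, Commute (ξ m) (ξ k) := by
    intro m k
    rw [hξ, hξ]
    have cuu : Commute ((1/2 : ℂ) • A + (m : ℂ) • (1 : Matrix (Fin NN) (Fin NN) ℂ))
        ((1/2 : ℂ) • A + (k : ℂ) • (1 : Matrix (Fin NN) (Fin NN) ℂ)) :=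
      Commute.add_left
        (Commute.add_right (((Commute.refl A).smul_right _).smul_left _)
          (((Commute.one_right A).smul_right _).smul_left _))
        (Commute.add_right (((Commute.one_left A).smul_right _).smul_left _)
          (((Commute.refl 1).smul_right _).smul_left _))
    have cuv : ∀ j, Commute ((1/2 : ℂ) • A + (m : ℂ) • (1 : Matrix (Fin NN) (Fin NN) ℂ))
        (C * γ j) := fun j =>
      Commute.add_left ((hAC.mul_right (hAγ j)).smul_left _)
        ((Commute.one_left _).smul_left _)
    have cvu : Commute (C * γ m)
        ((1/2 : ℂ) • A + (k : ℂ) • (1 : Matrix (Fin NN) (Fin NN) ℂ)) :=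
      Commute.add_right ((hAC.symm.mul_left (hAγ m).symm).smul_right _)
        ((Commute.one_right _).smul_right _)
    have cvv : Commute (C * γ m) (C * γ k) :=
      Commute.mul_left ((Commute.refl C).mul_right (hCγ k))
        ((hCγ m).symm.mul_right (hγγ m k))
    exact Commute.add_left (Commute.add_right cuu (cuv k)) (Commute.add_right cvu cvv)
  have hμγ : ∀ m k, Commute (μ m) (γ k) := by
    intro m k
    rw [hμ]
    exact Commute.add_left ((hCγ k).mul_left (hβγ m k)) (hBγ k)
  have hμμ : Commute (μ n) (μ (n - 1)) := by
    rw [hμ, hμ]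
    refine Commute.add_left (Commute.add_right ?_ ?_) (Commute.add_right ?_ (Commute.refl B))
    · exact Commute.mul_left ((Commute.refl C).mul_right (hCβ _))
        ((hCβ n).symm.mul_right (hββ n _))
    · exact hBC.symm.mul_left (hBβ n).symm
    · exact hBC.mul_right (hBβ _)
  have hβμ : Commute (β n) (μ n) := by
    rw [hμ]
    exact Commute.add_right ((hCβ n).symm.mul_right (hββ n n)) (hBβ n).symm
  calc ξ (n + 1) ^ 2 - ξ n ^ 2
      = (ξ (n + 1) + ξ n) * (ξ (n + 1) - ξ n) := (hξξ (n+1) n).sq_sub_sq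
    _ = β n * μ n * (ξ n - ξ (n + 1)) := by
        rw [show ξ (n+1) + ξ n = -(β n * μ n) by rw [h1]; abel, neg_mul, ← mul_neg, neg_sub]
    _ = μ n * (β n * (ξ n - ξ (n + 1))) := by rw [← mul_assoc, hβμ.eq]
    _ = μ n * (-(γ n * μ (n - 1)) + γ (n + 1) * μ (n + 1)) := by rw [h2]
    _ = γ (n + 1) * μ n * μ (n + 1) - γ n * μ (n - 1) * μ n := by
        rw [mul_add, mul_neg, ← mul_assoc, ← mul_assoc, (hμγ n (n+1)).eq,
          (hμγ n n).eq, mul_assoc (γ n), hμμ.eq, ← mul_assoc]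
        abel
end

section
/- In the commutative setting with B = 0, so μ_n = C·β_n, the relations β_n²·C = −(ξ_n + ξ_{n+1}) and ξ_{n+1}² − ξ_0² = γ_{n+1}·C²·β_n·β_{n+1} with C·γ_{n+1} = ξ_{n+1} − A/2 − n·I imply, for invertible relevant matrices, (ξ_n + ξ_{n+1})·(ξ_{n+1} + ξ_{n+2}) = ((ξ_{n+1} − A/2 − n·I)⁻¹·(ξ_{n+1}² − ξ_0²))², an instance of the discrete Painlevé IV equation. -/
/-- With `B = 0` (so `μ_n = C β_n`), the relations `β_n² C = −(ξ_n + ξ_{n+1})`,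
`ξ_{n+1}² − ξ_0² = γ_{n+1} (C β_n)(C β_{n+1})` and `C γ_{n+1} = ξ_{n+1} − A/2 − n I`
imply the discrete Painlevé IV equation
`(ξ_n + ξ_{n+1})(ξ_{n+1} + ξ_{n+2}) = ((ξ_{n+1} − A/2 − nI)⁻¹ (ξ_{n+1}² − ξ_0²))²`. -/
theorem stmt_17 (NN : ℕ)
    (A C : Matrix (Fin NN) (Fin NN) ℂ)
    (β γ ξ : ℕ → Matrix (Fin NN) (Fin NN) ℂ)
    (hAC : Commute A C)
    (hAβ : ∀ n, Commute A (β n)) (hAγ : ∀ n, Commute A (γ n))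
    (hCβ : ∀ n, Commute C (β n)) (hCγ : ∀ n, Commute C (γ n))
    (hAξ : ∀ n, Commute A (ξ n)) (hCξ : ∀ n, Commute C (ξ n))
    (hββ : ∀ m n, Commute (β m) (β n)) (hβγ : ∀ m n, Commute (β m) (γ n))
    (hβξ : ∀ m n, Commute (β m) (ξ n)) (hγγ : ∀ m n, Commute (γ m) (γ n))
    (hγξ : ∀ m n, Commute (γ m) (ξ n)) (hξξ : ∀ m n, Commute (ξ m) (ξ n))
    (hCinv : IsUnit C)
    (hinv : ∀ n : ℕ, IsUnit (ξ (n + 1) - (1/2 : ℂ) • A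
      - (n : ℂ) • (1 : Matrix (Fin NN) (Fin NN) ℂ)))
    (h1 : ∀ n, β n ^ 2 * C = -(ξ n + ξ (n + 1)))
    (h2 : ∀ n, ξ (n + 1) ^ 2 - ξ 0 ^ 2 = γ (n + 1) * (C * β n) * (C * β (n + 1)))
    (h3 : ∀ n : ℕ, C * γ (n + 1) = ξ (n + 1) - (1/2 : ℂ) • A
      - (n : ℂ) • (1 : Matrix (Fin NN) (Fin NN) ℂ)) :
    ∀ n : ℕ, (ξ n + ξ (n + 1)) * (ξ (n + 1) + ξ (n + 2))
      = ((ξ (n + 1) - (1/2 : ℂ) • A - (n : ℂ) • (1 : Matrix (Fin NN) (Fin NN) ℂ))⁻¹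
          * (ξ (n + 1) ^ 2 - ξ 0 ^ 2)) ^ 2 := by
  intro n
  set D := ξ (n + 1) - (1/2 : ℂ) • A - (n : ℂ) • (1 : Matrix (Fin NN) (Fin NN) ℂ) with hDdef
  have hdet : IsUnit D.det := (Matrix.isUnit_iff_isUnit_det D).mp (hinv n)
  -- reorder: γ(n+1)*(C*β n)*(C*β (n+1)) = (C*γ(n+1))*(C*β n*β (n+1))
  have e1 : γ (n+1) * (C * β n) * (C * β (n+1))
      = (C * γ (n+1)) * (C * β n * β (n+1)) := by
    have h := (hCγ (n+1)).symm.eq  -- γ*C = C*γ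
    have hb := (hCβ n).symm.eq     -- β n * C = C * β n
    simp only [mul_assoc]
    rw [← mul_assoc (β n) C, hb, ← mul_assoc (γ (n+1)) C, h]
    simp only [mul_assoc]
  have hD : D * (C * β n * β (n+1)) = ξ (n+1) ^ 2 - ξ 0 ^ 2 := by
    rw [h2 n, e1, h3 n]
  have key : D⁻¹ * (ξ (n+1) ^ 2 - ξ 0 ^ 2) = C * β n * β (n+1) := by
    rw [← hD, ← mul_assoc, Matrix.nonsing_inv_mul D hdet, one_mul]
  rw [key]
  -- now show (ξ n + ξ (n+1)) * (ξ (n+1) + ξ (n+2)) = (C * β n * β (n+1))^2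
  have hA : (C * β n * β (n+1)) ^ 2 = (β n ^ 2 * C) * (β (n+1) ^ 2 * C) := by
    have c1 : Commute (C * β n) (β (n+1)) := (hCβ (n+1)).mul_left (hββ n (n+1))
    rw [c1.mul_pow, (hCβ n).mul_pow]
    have p1 : Commute (C^2) (β n ^ 2) := ((hCβ n).pow_pow 2 2)
    have p2 : Commute (C^2) (β (n+1) ^ 2) := ((hCβ (n+1)).pow_pow 2 2)
    have p3 : Commute C (β (n+1) ^ 2) := ((hCβ (n+1)).pow_right 2)
    calc C^2 * β n ^2 * β (n+1)^2 = β n ^2 * C^2 * β (n+1)^2 := by rw [p1.eq]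
      _ = β n ^2 * (C * (C * β (n+1)^2)) := by simp only [mul_assoc, sq]
      _ = β n ^2 * (C * (β (n+1)^2 * C)) := by rw [p3.eq]
      _ = (β n ^ 2 * C) * (β (n+1) ^ 2 * C) := by simp only [mul_assoc]
  rw [hA, h1 n, h1 (n+1), neg_mul_neg]
end
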